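/- Let G be a connected subgroup of GL(4,ℝ) (connected in the subspace topology). Suppose B₁ and B₂ are two linearly independent nondegenerate symmetric bilinear forms on ℝ⁴ both preserved by every element of G (i.e. Bᵢ(g·v, g·w) = Bᵢ(v,w) for all g ∈ G, v,w ∈ ℝ⁴, i = 1,2). Then G acts reducibly on ℝ⁴, i.e. there exists a G-invariant linear subspace W with 0 ≠ W ≠ ℝ⁴. -/

import Mathlib

open Matrix Polynomial
set_option maxHeartbeats 1000000

lemma aux_ker_ne_bot {V : Type*} [AddCommGroup V] [Module ℝ V] [FiniteDimensional ℝ V]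
    (A : Module.End ℝ V) {q : ℝ[X]} (hq : q ∣ minpoly ℝ A)
    (hq1 : 0 < q.natDegree) : LinearMap.ker (aeval A q) ≠ ⊥ := by
  have hint : IsIntegral ℝ A := Algebra.IsIntegral.isIntegral A
  have hm0 : minpoly ℝ A ≠ 0 := minpoly.ne_zero hint
  obtain ⟨r, hr⟩ := hq
  have hq0 : q ≠ 0 := fun h => hm0 (by simp [hr, h])
  have hr0 : r ≠ 0 := fun h => hm0 (by simp [hr, h])
  have hrA : aeval A r ≠ 0 := by
    intro h
    have h1 := minpoly.degree_le_of_ne_zero ℝ A hr0 h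
    have hdeg : (minpoly ℝ A).natDegree = q.natDegree + r.natDegree := by
      rw [hr, natDegree_mul hq0 hr0]
    have h2 := natDegree_le_natDegree h1
    omega
  obtain ⟨x, hx⟩ : ∃ x, aeval A r x ≠ 0 := by
    by_contra h; push_neg at h; exact hrA (LinearMap.ext h)
  rw [Submodule.ne_bot_iff]
  refine ⟨aeval A r x, ?_, hx⟩
  rw [LinearMap.mem_ker, ← Module.End.mul_apply, ← _root_.map_mul, ← hr, minpoly.aeval]
  simp

lemma aux_commute_aeval {V : Type*} [AddCommGroup V] [Module ℝ V]
    (A L : Module.End ℝ V) (h : Commute L A) (p : ℝ[X]) : Commute L (aeval A p) := by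
  induction p using Polynomial.induction_on' with
  | add p q hp hq => rw [map_add]; exact hp.add_right hq
  | monomial n a =>
    rw [aeval_monomial]
    exact (Algebra.commute_algebraMap_right a L).mul_right (h.pow_right n)

lemma aux_monic_quadratic {q : ℝ[X]} (hm : q.Monic) (h2 : q.natDegree = 2) :
    q = X^2 + C (q.coeff 1) * X + C (q.coeff 0) := by
  have h := eraseLead_add_C_mul_X_pow q
  rw [hm.leadingCoeff, C_1, one_mul, h2] at h
  have hle : q.eraseLead.natDegree ≤ 1 := by
    have := q.eraseLead_natDegree_le; omega
  have he := eq_X_add_C_of_natDegree_le_one hle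
  rw [eraseLead_coeff_of_ne 1 (by omega), eraseLead_coeff_of_ne 0 (by omega)] at he
  conv_lhs => rw [← h, he]
  ring

lemma aux_span_pair_le_two (u v : Fin 4 → ℝ) :
    Module.finrank ℝ (Submodule.span ℝ ({u, v} : Set (Fin 4 → ℝ))) ≤ 2 := by
  classical
  refine le_trans (finrank_span_le_card _) (le_trans (Finset.card_le_card (t := {u, v}) ?_) ?_)
  · intro x hx
    simp only [Set.mem_toFinset] at hx
    simpa using hx
  · exact le_trans (Finset.card_insert_le _ _) (by simp)

/-- **Theorem 3.1 (i).** If a connected subgroup `G` of `GL(4, ℝ)` preserves two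
linearly independent nondegenerate symmetric bilinear forms on `ℝ⁴`, then `G`
acts reducibly on `ℝ⁴`. -/
theorem reducible_of_two_forms_connected
    (G : Subgroup (GL (Fin 4) ℝ))
    (hconn : IsConnected (G : Set (GL (Fin 4) ℝ)))
    (B₁ B₂ : LinearMap.BilinForm ℝ (Fin 4 → ℝ))
    (hsymm₁ : ∀ v w, B₁ v w = B₁ w v)
    (hsymm₂ : ∀ v w, B₂ v w = B₂ w v)
    (hnd₁ : ∀ v, (∀ w, B₁ v w = 0) → v = 0)
    (hnd₂ : ∀ v, (∀ w, B₂ v w = 0) → v = 0)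
    (hind : LinearIndependent ℝ ![B₁, B₂])
    (hinv₁ : ∀ g ∈ G, ∀ v w : Fin 4 → ℝ,
      B₁ ((g : Matrix (Fin 4) (Fin 4) ℝ).mulVec v)
         ((g : Matrix (Fin 4) (Fin 4) ℝ).mulVec w) = B₁ v w)
    (hinv₂ : ∀ g ∈ G, ∀ v w : Fin 4 → ℝ,
      B₂ ((g : Matrix (Fin 4) (Fin 4) ℝ).mulVec v)
         ((g : Matrix (Fin 4) (Fin 4) ℝ).mulVec w) = B₂ v w) :
    ∃ W : Submodule ℝ (Fin 4 → ℝ), W ≠ ⊥ ∧ W ≠ ⊤ ∧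
      ∀ g ∈ G, ∀ v ∈ W, (g : Matrix (Fin 4) (Fin 4) ℝ).mulVec v ∈ W := by
  classical
  -- the intertwining endomorphism A with B₁ (A v) w = B₂ v w
  obtain ⟨A, hA⟩ : ∃ A : Module.End ℝ (Fin 4 → ℝ), ∀ v w, B₁ (A v) w = B₂ v w := by
    refine ⟨((B₁.toDual ⟨hnd₁, fun y hy => hnd₁ y fun x => by rw [hsymm₁]; exact hy x⟩).symm : Module.Dual ℝ (Fin 4 → ℝ) →ₗ[ℝ] (Fin 4 → ℝ)).comp B₂,
      fun v w => ?_⟩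
    simp only [LinearMap.comp_apply, LinearMap.coe_coe]
    exact LinearMap.BilinForm.apply_toDual_symm_apply (B₂ v) w
  have hext : ∀ x y : Fin 4 → ℝ, (∀ w, B₁ x w = B₁ y w) → x = y := by
    intro x y h
    have hxy : x - y = 0 := by
      refine hnd₁ _ (fun w => ?_)
      rw [map_sub, LinearMap.sub_apply, h w, sub_self]
    exact sub_eq_zero.mp hxy
  have hg_cancel : ∀ g : GL (Fin 4) ℝ, ∀ w : Fin 4 → ℝ,
      (g : Matrix (Fin 4) (Fin 4) ℝ).mulVec
        (((g⁻¹ : GL (Fin 4) ℝ) : Matrix (Fin 4) (Fin 4) ℝ).mulVec w) = w := by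
    intro g w
    rw [mulVec_mulVec, Units.mul_inv, one_mulVec]
  have hg_cancel' : ∀ g : GL (Fin 4) ℝ, ∀ w : Fin 4 → ℝ,
      ((g⁻¹ : GL (Fin 4) ℝ) : Matrix (Fin 4) (Fin 4) ℝ).mulVec
        ((g : Matrix (Fin 4) (Fin 4) ℝ).mulVec w) = w := by
    intro g w
    rw [mulVec_mulVec, Units.inv_mul, one_mulVec]
  -- invariance in "transpose" form
  have hinv₁' : ∀ g ∈ G, ∀ x w : Fin 4 → ℝ,
      B₁ ((g : Matrix (Fin 4) (Fin 4) ℝ).mulVec x) w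
        = B₁ x (((g⁻¹ : GL (Fin 4) ℝ) : Matrix (Fin 4) (Fin 4) ℝ).mulVec w) := by
    intro g hg x w
    conv_lhs => rw [← hg_cancel g w]
    exact hinv₁ g hg x _
  -- A commutes with every element of G
  have hAg : ∀ g ∈ G, ∀ v : Fin 4 → ℝ,
      (g : Matrix (Fin 4) (Fin 4) ℝ).mulVec (A v)
        = A ((g : Matrix (Fin 4) (Fin 4) ℝ).mulVec v) := by
    intro g hg v
    refine hext _ _ (fun w => ?_)
    have h2 := hinv₂ g hg v (((g⁻¹ : GL (Fin 4) ℝ) : Matrix (Fin 4) (Fin 4) ℝ).mulVec w)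
    rw [hg_cancel g w] at h2
    rw [hinv₁' g hg, hA, ← h2, hA]
  -- A is B₁-self-adjoint
  have hAsa : ∀ v w, B₁ (A v) w = B₁ v (A w) := by
    intro v w
    rw [hA, hsymm₂ v w, ← hA, hsymm₁]
  -- A is not scalar
  have hnotscalar : ∀ lam : ℝ, (∀ v, A v = lam • v) → False := by
    intro lam hlam
    have hB2 : B₂ = lam • B₁ := by
      refine LinearMap.ext fun v => LinearMap.ext fun w => ?_
      rw [← hA, hlam]
      simp only [LinearMap.smul_apply, _root_.map_smul, smul_eq_mul]
    have hind2 := (linearIndependent_fin2 (K := ℝ) (f := ![B₁, B₂])).mp hind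
    simp only [Matrix.cons_val_one, Matrix.head_cons, Matrix.cons_val_zero] at hind2
    rcases eq_or_ne lam 0 with h0 | h0
    · exact hind2.1 (by rw [hB2, h0, zero_smul])
    · exact hind2.2 lam⁻¹ (by rw [hB2, smul_smul, inv_mul_cancel₀ h0, one_smul])
  -- kernels of polynomials in A are G-invariant
  have hkerinv : ∀ p : ℝ[X], ∀ g ∈ G, ∀ v ∈ LinearMap.ker (aeval A p),
      (g : Matrix (Fin 4) (Fin 4) ℝ).mulVec v ∈ LinearMap.ker (aeval A p) := by
    intro p g hg v hv
    have hc : Commute ((g : Matrix (Fin 4) (Fin 4) ℝ).mulVecLin) A :=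
      LinearMap.ext fun x => by simp [Matrix.mulVecLin_apply, hAg g hg x]
    have hcp := aux_commute_aeval A _ hc p
    rw [LinearMap.mem_ker] at hv ⊢
    have h2 : (aeval A p) ((g : Matrix (Fin 4) (Fin 4) ℝ).mulVecLin v)
        = (g : Matrix (Fin 4) (Fin 4) ℝ).mulVecLin ((aeval A p) v) := by
      rw [← Module.End.mul_apply, ← hcp, Module.End.mul_apply]
    simpa [Matrix.mulVecLin_apply, hv, mulVec_zero] using h2
  -- a monic irreducible factor of the minimal polynomial
  have hint : IsIntegral ℝ A := Algebra.IsIntegral.isIntegral A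
  have hm0 : minpoly ℝ A ≠ 0 := minpoly.ne_zero hint
  have hmdeg : 0 < (minpoly ℝ A).natDegree := minpoly.natDegree_pos hint
  have hmu : ¬ IsUnit (minpoly ℝ A) := by
    intro h
    have := natDegree_eq_zero_of_isUnit h
    omega
  obtain ⟨q0, hq0irr, hq0dvd⟩ := WfDvdMonoid.exists_irreducible_factor hmu hm0
  have hq0ne : q0 ≠ 0 := hq0irr.ne_zero
  have hlc : IsUnit (C (q0.leadingCoeff)⁻¹) := by
    rw [Polynomial.isUnit_C]
    exact (inv_ne_zero (leadingCoeff_ne_zero.mpr hq0ne)).isUnit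
  set q : ℝ[X] := q0 * C (q0.leadingCoeff)⁻¹ with hqdef
  have hqmonic : q.Monic := monic_mul_leadingCoeff_inv hq0ne
  have hassoc : Associated q0 q := ⟨hlc.unit, by rw [IsUnit.unit_spec]⟩
  have hqirr : Irreducible q := hassoc.irreducible hq0irr
  have hqdvd : q ∣ minpoly ℝ A := (hassoc.symm.dvd).trans hq0dvd
  have hqdeg1 : 0 < q.natDegree :=
    natDegree_pos_iff_degree_pos.mpr (degree_pos_of_irreducible hqirr)
  have hqdeg2 : q.natDegree ≤ 2 := hqirr.natDegree_le_two
  have hker := aux_ker_ne_bot A hqdvd hqdeg1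
  by_cases htop : LinearMap.ker (aeval A q) = ⊤
  swap
  · exact ⟨_, hker, htop, hkerinv q⟩
  obtain hdeg1 | hdeg2 : q.natDegree = 1 ∨ q.natDegree = 2 := by omega
  · -- degree one: A is scalar, contradiction
    exfalso
    have hqeq := hqmonic.eq_X_add_C hdeg1
    refine hnotscalar (-(q.coeff 0)) (fun v => ?_)
    have hv : (aeval A q) v = 0 := by
      have : v ∈ LinearMap.ker (aeval A q) := htop ▸ Submodule.mem_top
      exact LinearMap.mem_ker.mp this
    rw [hqeq] at hv
    simp only [map_add, aeval_X, aeval_C, LinearMap.add_apply,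
      Module.algebraMap_end_apply] at hv
    have := eq_neg_of_add_eq_zero_left hv
    rw [this, neg_smul]
  -- degree two
  have hqeq := aux_monic_quadratic hqmonic hdeg2
  set b : ℝ := q.coeff 1 with hbdef
  set c : ℝ := q.coeff 0 with hcdef
  -- no real root, so negative discriminant
  have hnoroot : ∀ x : ℝ, q.eval x ≠ 0 := by
    intro x hx
    obtain ⟨s, hs⟩ := dvd_iff_isRoot.mpr hx
    rcases hqirr.isUnit_or_isUnit hs with h | h
    · exact (Polynomial.not_isUnit_X_sub_C x) h
    · have hs0 : s ≠ 0 := by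
        rintro rfl
        rw [mul_zero] at hs
        rw [hs] at hdeg2
        simp at hdeg2
      have hX0 : (X - Polynomial.C x : ℝ[X]) ≠ 0 := X_sub_C_ne_zero x
      have hnd := natDegree_mul hX0 hs0
      rw [← hs, hdeg2, natDegree_X_sub_C] at hnd
      have := natDegree_eq_zero_of_isUnit h
      omega
  have hdisc : b ^ 2 - 4 * c < 0 := by
    by_contra hge
    push_neg at hge
    have hge' : 0 ≤ discrim 1 b c := by rw [discrim]; linarith
    obtain ⟨x, hx⟩ := exists_quadratic_eq_zero one_ne_zero
      ⟨Real.sqrt (discrim 1 b c), (Real.mul_self_sqrt hge').symm⟩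
    refine hnoroot x ?_
    rw [hqeq]
    simp only [eval_add, eval_mul, eval_pow, eval_X, eval_C]
    nlinarith [hx]
  -- A satisfies A² + bA + c = 0
  have hq0' : aeval A q = 0 := LinearMap.ker_eq_top.mp htop
  have hAA : A * A + b • A + c • (1 : Module.End ℝ (Fin 4 → ℝ)) = 0 := by
    have h1 : aeval A (X^2 + C b * X + C c) = 0 := by rw [← hqeq]; exact hq0'
    simp only [map_add, _root_.map_mul, map_pow, aeval_X, aeval_C] at h1
    rw [Algebra.algebraMap_eq_smul_one, Algebra.algebraMap_eq_smul_one,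
      smul_mul_assoc, one_mul, pow_two] at h1
    exact h1
  set d : ℝ := c - b ^ 2 / 4 with hddef
  have hd : 0 < d := by rw [hddef]; linarith
  set t : ℝ := Real.sqrt d with htdef
  have ht : t * t = d := Real.mul_self_sqrt hd.le
  have ht0 : t ≠ 0 := by
    intro h; rw [h, mul_zero] at ht; exact hd.ne' ht.symm
  -- the complex structure J
  set J : Module.End ℝ (Fin 4 → ℝ) := t⁻¹ • (A + (b / 2) • 1) with hJdef
  have hmid : (A + (b / 2) • 1) * (A + (b / 2) • 1)
      = (-d) • (1 : Module.End ℝ (Fin 4 → ℝ)) := by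
    have hexp : (A + (b / 2) • 1) * (A + (b / 2) • 1)
        = (A * A + b • A + c • 1) + (b ^ 2 / 4 - c) • (1 : Module.End ℝ (Fin 4 → ℝ)) := by
      simp only [mul_add, add_mul, smul_mul_assoc, mul_smul_comm, one_mul, mul_one, smul_smul]
      module
    rw [hexp, hAA, zero_add]
    rw [hddef]
    module
  have hJmul : J * J = (-1 : ℝ) • (1 : Module.End ℝ (Fin 4 → ℝ)) := by
    rw [hJdef, smul_mul_smul_comm, hmid, smul_smul]
    congr 1
    field_simp
    nlinarith [ht]
  have hJJ : ∀ v, J (J v) = -v := by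
    intro v
    have := LinearMap.ext_iff.mp hJmul v
    simpa [Module.End.mul_apply, LinearMap.smul_apply, Module.End.one_apply] using this
  have hJapp : ∀ v, J v = t⁻¹ • (A v + (b / 2) • v) := by
    intro v
    simp [hJdef, LinearMap.smul_apply, LinearMap.add_apply, Module.End.one_apply]
  have hJsa : ∀ v w, B₁ (J v) w = B₁ v (J w) := by
    intro v w
    rw [hJapp, hJapp]
    simp only [_root_.map_smul, map_add, LinearMap.smul_apply, LinearMap.add_apply, smul_eq_mul]
    rw [hAsa]
  have hJg : ∀ g ∈ G, ∀ v : Fin 4 → ℝ,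
      (g : Matrix (Fin 4) (Fin 4) ℝ).mulVec (J v)
        = J ((g : Matrix (Fin 4) (Fin 4) ℝ).mulVec v) := by
    intro g hg v
    rw [hJapp, hJapp]
    rw [← mulVecLin_apply, _root_.map_smul, map_add, _root_.map_smul, mulVecLin_apply, mulVecLin_apply,
      hAg g hg]
  have hJJB : ∀ v w, B₁ (J v) (J w) = - B₁ v w := by
    intro v w
    rw [hJsa, hJJ, map_neg]
  -- the complex bilinear form and scalar action
  obtain ⟨Cf, hCf⟩ : ∃ Cf : (Fin 4 → ℝ) → (Fin 4 → ℝ) → ℂ,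
      ∀ v w, Cf v w = (B₁ v w : ℂ) - (B₁ (J v) w : ℂ) * Complex.I :=
    ⟨_, fun _ _ => rfl⟩
  obtain ⟨sm, hsm⟩ : ∃ sm : ℂ → (Fin 4 → ℝ) → (Fin 4 → ℝ),
      ∀ z v, sm z v = z.re • v + z.im • J v := ⟨_, fun _ _ => rfl⟩
  have hCre : ∀ v w, (Cf v w).re = B₁ v w := by intro v w; simp [hCf]
  have hCim : ∀ v w, (Cf v w).im = -(B₁ (J v) w) := by intro v w; simp [hCf]
  have hC0r : ∀ v, Cf v 0 = 0 := by intro v; simp [hCf]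
  have hCaddr : ∀ v w₁ w₂, Cf v (w₁ + w₂) = Cf v w₁ + Cf v w₂ := by
    intro v w₁ w₂
    simp only [hCf, map_add, LinearMap.add_apply, Complex.ofReal_add]
    ring
  have hCsubr : ∀ v w₁ w₂, Cf v (w₁ - w₂) = Cf v w₁ - Cf v w₂ := by
    intro v w₁ w₂
    simp only [hCf, map_sub, LinearMap.sub_apply, Complex.ofReal_sub]
    ring
  have hCsmulr : ∀ (r : ℝ) v w, Cf v (r • w) = (r : ℂ) * Cf v w := by
    intro r v w
    simp only [hCf, _root_.map_smul, smul_eq_mul, Complex.ofReal_mul]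
    ring
  have hCJr : ∀ v w, Cf v (J w) = Complex.I * Cf v w := by
    intro v w
    simp only [hCf]
    rw [← hJsa v w, hJJB]
    push_cast
    ring_nf
    rw [Complex.I_sq]
    ring
  have hCsmr : ∀ z v w, Cf v (sm z w) = z * Cf v w := by
    intro z v w
    simp only [hsm]
    rw [hCaddr, hCsmulr, hCsmulr, hCJr,
      show ((z.re : ℂ) * Cf v w + (z.im : ℂ) * (Complex.I * Cf v w))
        = ((z.re : ℂ) + (z.im : ℂ) * Complex.I) * Cf v w from by ring,
      Complex.re_add_im]
  have hCsym : ∀ v w, Cf v w = Cf w v := by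
    intro v w
    simp only [hCf]
    rw [hsymm₁ v w, hJsa v w, hsymm₁ (J w) v]
  have hCsml : ∀ z v w, Cf (sm z v) w = z * Cf v w := by
    intro z v w
    rw [hCsym, hCsmr, hCsym]
  have hCaddl : ∀ v₁ v₂ w, Cf (v₁ + v₂) w = Cf v₁ w + Cf v₂ w := by
    intro v₁ v₂ w
    rw [hCsym, hCaddr, hCsym w v₁, hCsym w v₂]
  have hCsubl : ∀ v₁ v₂ w, Cf (v₁ - v₂) w = Cf v₁ w - Cf v₂ w := by
    intro v₁ v₂ w
    rw [hCsym, hCsubr, hCsym w v₁, hCsym w v₂]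
  have hCg : ∀ g ∈ G, ∀ v w, Cf ((g : Matrix (Fin 4) (Fin 4) ℝ).mulVec v)
      ((g : Matrix (Fin 4) (Fin 4) ℝ).mulVec w) = Cf v w := by
    intro g hg v w
    simp only [hCf]
    rw [hinv₁ g hg v w, ← hJg g hg v, hinv₁ g hg (J v) w]
  have hCnd : ∀ v, (∀ w, Cf v w = 0) → v = 0 := by
    intro v h
    refine hnd₁ v (fun w => ?_)
    have := congrArg Complex.re (h w)
    rw [hCre] at this
    simpa using this
  have hsm_mul : ∀ z z' v, sm z (sm z' v) = sm (z * z') v := by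
    intro z z' v
    simp only [hsm, map_add, _root_.map_smul, hJJ, Complex.mul_re, Complex.mul_im]
    module
  have hsm_one : ∀ v, sm 1 v = v := by intro v; simp [hsm]
  have hsm_g : ∀ g ∈ G, ∀ z v, (g : Matrix (Fin 4) (Fin 4) ℝ).mulVec (sm z v)
      = sm z ((g : Matrix (Fin 4) (Fin 4) ℝ).mulVec v) := by
    intro g hg z v
    simp only [hsm]
    rw [← mulVecLin_apply, map_add, _root_.map_smul, _root_.map_smul,
      mulVecLin_apply, mulVecLin_apply, hJg g hg]
  -- existence of a nonzero isotropic vector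
  obtain ⟨v₀, hv₀ne, hv₀⟩ : ∃ v, v ≠ 0 ∧ Cf v v = 0 := by
    by_contra hno
    push_neg at hno
    obtain ⟨u, hu⟩ := exists_ne (0 : Fin 4 → ℝ)
    obtain ⟨w, hw⟩ : ∃ w, w ∉ Submodule.span ℝ ({u, J u} : Set (Fin 4 → ℝ)) := by
      by_contra hall
      push_neg at hall
      have h4 : Module.finrank ℝ (⊤ : Submodule ℝ (Fin 4 → ℝ))
          ≤ Module.finrank ℝ (Submodule.span ℝ ({u, J u} : Set (Fin 4 → ℝ))) :=
        Submodule.finrank_mono (fun x _ => hall x)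
      rw [finrank_top] at h4
      have h5 := aux_span_pair_le_two u (J u)
      rw [Module.finrank_fin_fun] at h4
      omega
    have hwne : w ≠ 0 := fun h => hw (h ▸ Submodule.zero_mem _)
    have haw : Cf w w ≠ 0 := hno w hwne
    obtain ⟨s, hs⟩ := IsAlgClosed.exists_pow_nat_eq
      (discrim (Cf w w) (Cf u w + Cf w u) (Cf u u)) (n := 2) (by norm_num)
    obtain ⟨z, hz⟩ := exists_quadratic_eq_zero haw ⟨s, by rw [← hs]; ring⟩
    have hCv : Cf (u + sm z w) (u + sm z w) = 0 := by
      rw [hCaddl, hCsml, hCaddr, hCaddr, hCsmr, hCsmr]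
      linear_combination hz
    have hvne : u + sm z w ≠ 0 := by
      intro h0
      rcases eq_or_ne z 0 with rfl | hz0
      · apply hu
        simpa [hsm] using h0
      · apply hw
        have hwu : w = sm z⁻¹ (sm z w) := by
          rw [hsm_mul, inv_mul_cancel₀ hz0, hsm_one]
        have hneg : sm z w = -u := eq_neg_of_add_eq_zero_right h0
        rw [hwu, hneg]
        have hmem : sm z⁻¹ u ∈ Submodule.span ℝ ({u, J u} : Set (Fin 4 → ℝ)) := by
          simp only [hsm]
          refine Submodule.add_mem _ ?_ ?_
          · exact Submodule.smul_mem _ _ (Submodule.subset_span (by simp))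
          · exact Submodule.smul_mem _ _ (Submodule.subset_span (by simp))
        have : sm z⁻¹ (-u) = -(sm z⁻¹ u) := by
          simp only [hsm, map_neg]
          module
        rw [this]
        exact Submodule.neg_mem _ hmem
    exact hno _ hvne hCv
  -- a second isotropic vector v₁ with Cf v₀ v₁ = 1
  obtain ⟨e, he⟩ : ∃ e, Cf v₀ e = 1 := by
    have h1 : ¬ ∀ w, Cf v₀ w = 0 := fun h => hv₀ne (hCnd v₀ h)
    push_neg at h1
    obtain ⟨w, hw⟩ := h1
    exact ⟨sm (Cf v₀ w)⁻¹ w, by rw [hCsmr, inv_mul_cancel₀ hw]⟩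
  set c₀ : ℂ := Cf e e with hc₀
  set v₁ : Fin 4 → ℝ := e - sm (c₀ / 2) v₀ with hv₁def
  have hev₀ : Cf e v₀ = 1 := by rw [← hCsym]; exact he
  have hv₁v₁ : Cf v₁ v₁ = 0 := by
    rw [hv₁def, hCsubl, hCsubr, hCsubr, hCsml, hCsmr, hCsmr, hCsml, he, hev₀, hv₀, ← hc₀]
    ring
  have hv₀v₁ : Cf v₀ v₁ = 1 := by
    rw [hv₁def, hCsubr, hCsmr, he, hv₀]
    ring
  have hv₁v₀ : Cf v₁ v₀ = 1 := by rw [hCsym]; exact hv₀v₁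
  have hv₁ne : v₁ ≠ 0 := by
    intro h
    rw [h, hC0r] at hv₀v₁
    exact zero_ne_one hv₀v₁
  -- the two isotropic lines
  set W : Submodule ℝ (Fin 4 → ℝ) := Submodule.span ℝ {v₀, J v₀} with hWdef
  set W₁ : Submodule ℝ (Fin 4 → ℝ) := Submodule.span ℝ {v₁, J v₁} with hW₁def
  have hmk : ∀ a b' : ℝ, (((a : ℂ) + (b' : ℂ) * Complex.I).re = a)
      ∧ (((a : ℂ) + (b' : ℂ) * Complex.I).im = b') := by
    intro a b'; constructor <;> simp
  have hWiff : ∀ x, x ∈ W ↔ ∃ z : ℂ, x = sm z v₀ := by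
    intro x
    rw [hWdef, Submodule.mem_span_pair]
    constructor
    · rintro ⟨a, b', rfl⟩
      exact ⟨(a : ℂ) + (b' : ℂ) * Complex.I, by rw [hsm]; simp⟩
    · rintro ⟨z, rfl⟩
      exact ⟨z.re, z.im, (hsm z v₀).symm⟩
  have hW₁iff : ∀ x, x ∈ W₁ ↔ ∃ z : ℂ, x = sm z v₁ := by
    intro x
    rw [hW₁def, Submodule.mem_span_pair]
    constructor
    · rintro ⟨a, b', rfl⟩
      exact ⟨(a : ℂ) + (b' : ℂ) * Complex.I, by rw [hsm]; simp⟩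
    · rintro ⟨z, rfl⟩
      exact ⟨z.re, z.im, (hsm z v₁).symm⟩
  -- spanning: every vector is a complex combination of v₀ and v₁
  have hCJl : ∀ v w, Cf (J v) w = Complex.I * Cf v w := by
    intro v w
    rw [hCsym, hCJr, hCsym]
  have hli : LinearIndependent ℝ ![v₀, J v₀, v₁, J v₁] := by
    rw [Fintype.linearIndependent_iff]
    intro g hg
    have hsum : g 0 • v₀ + g 1 • J v₀ + g 2 • v₁ + g 3 • J v₁ = 0 := by
      rw [← hg]
      simp [Fin.sum_univ_four]
    have h1 : (g 0 : ℂ) + (g 1 : ℂ) * Complex.I = 0 := by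
      have hh := congrArg (Cf v₁) hsum
      simp only [hC0r, hCaddr, hCsmulr, hCJr, hv₁v₀, hv₁v₁,
        mul_zero, mul_one, add_zero] at hh
      linear_combination hh
    have h2 : (g 2 : ℂ) + (g 3 : ℂ) * Complex.I = 0 := by
      have hh := congrArg (Cf v₀) hsum
      simp only [hC0r, hCaddr, hCsmulr, hCJr, hv₀v₁, hv₀,
        mul_zero, mul_one, add_zero] at hh
      linear_combination hh
    have e1 : g 0 = 0 ∧ g 1 = 0 := by
      constructor
      · have := congrArg Complex.re h1; simpa using this
      · have := congrArg Complex.im h1; simpa using this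
    have e2 : g 2 = 0 ∧ g 3 = 0 := by
      constructor
      · have := congrArg Complex.re h2; simpa using this
      · have := congrArg Complex.im h2; simpa using this
    intro i
    fin_cases i
    · exact e1.1
    · exact e1.2
    · exact e2.1
    · exact e2.2
  have hspan : ∀ x : Fin 4 → ℝ, ∃ z₁ z₂ : ℂ, x = sm z₁ v₀ + sm z₂ v₁ := by
    have htop2 := hli.span_eq_top_of_card_eq_finrank
      (by simp [Module.finrank_fin_fun])
    intro x
    have hx : x ∈ Submodule.span ℝ (Set.range ![v₀, J v₀, v₁, J v₁]) := by
      rw [htop2]; trivial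
    rw [Submodule.mem_span_range_iff_exists_fun] at hx
    obtain ⟨cc, hcc⟩ := hx
    refine ⟨(cc 0 : ℂ) + (cc 1 : ℂ) * Complex.I, (cc 2 : ℂ) + (cc 3 : ℂ) * Complex.I, ?_⟩
    rw [← hcc]
    simp only [Fin.sum_univ_four, hsm, Matrix.cons_val_zero, Matrix.cons_val_one,
      Matrix.head_cons, Matrix.cons_val_two, Matrix.tail_cons, Matrix.cons_val_three]
    simp only [Complex.add_re, Complex.ofReal_re, Complex.mul_re, Complex.I_re,
      Complex.I_im, Complex.ofReal_im, Complex.add_im, Complex.mul_im]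
    module
  -- null vectors lie on one of the two lines
  have hnull : ∀ x, Cf x x = 0 → x ∈ W ∨ x ∈ W₁ := by
    intro x hx
    obtain ⟨z₁, z₂, rfl⟩ := hspan x
    have hexp : Cf (sm z₁ v₀ + sm z₂ v₁) (sm z₁ v₀ + sm z₂ v₁) = 2 * (z₁ * z₂) := by
      simp only [hCaddl, hCaddr, hCsml, hCsmr, hv₀, hv₁v₁, hv₀v₁, hv₁v₀,
        mul_zero, mul_one, add_zero, zero_add]
      ring
    rw [hexp] at hx
    have hz12 : z₁ * z₂ = 0 := by
      rcases mul_eq_zero.mp hx with h | h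
      · exact absurd h (by norm_num)
      · exact h
    rcases mul_eq_zero.mp hz12 with h | h
    · right
      rw [h, show sm 0 v₀ = 0 by simp [hsm], zero_add]
      exact (hW₁iff _).mpr ⟨z₂, rfl⟩
    · left
      rw [h, show sm 0 v₁ = 0 by simp [hsm], add_zero]
      exact (hWiff _).mpr ⟨z₁, rfl⟩
  have hWW₁ : ∀ x, x ∈ W → x ∈ W₁ → x = 0 := by
    intro x hx hx₁
    obtain ⟨z, rfl⟩ := (hWiff x).mp hx
    obtain ⟨z', hz'⟩ := (hW₁iff _).mp hx₁
    have h1 : Cf v₀ (sm z v₀) = 0 := by rw [hCsmr, hv₀, mul_zero]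
    have h2 : Cf v₀ (sm z v₀) = z' := by rw [hz', hCsmr, hv₀v₁, mul_one]
    rw [h1] at h2
    rw [hz', ← h2]
    simp [hsm]
  -- connectedness: G maps v₀ into W
  have hWclosed : IsClosed (W : Set (Fin 4 → ℝ)) := Submodule.closed_of_finiteDimensional W
  have hW₁closed : IsClosed (W₁ : Set (Fin 4 → ℝ)) := Submodule.closed_of_finiteDimensional W₁
  have hGW : ∀ g ∈ G, (g : Matrix (Fin 4) (Fin 4) ℝ).mulVec v₀ ∈ W := by
    have hconn' : ConnectedSpace (G : Set (GL (Fin 4) ℝ)) :=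
      isConnected_iff_connectedSpace.mp hconn
    set S₁ : Set (G : Set (GL (Fin 4) ℝ)) :=
      {g | (((g : GL (Fin 4) ℝ) : Matrix (Fin 4) (Fin 4) ℝ).mulVec v₀) ∈ W} with hS₁def
    set S₂ : Set (G : Set (GL (Fin 4) ℝ)) :=
      {g | (((g : GL (Fin 4) ℝ) : Matrix (Fin 4) (Fin 4) ℝ).mulVec v₀) ∈ W₁} with hS₂def
    have hcont : Continuous (fun g : (G : Set (GL (Fin 4) ℝ)) =>
        ((g : GL (Fin 4) ℝ) : Matrix (Fin 4) (Fin 4) ℝ).mulVec v₀) :=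
      (Units.continuous_val.comp continuous_subtype_val).matrix_mulVec continuous_const
    have hS₁c : IsClosed S₁ := hWclosed.preimage hcont
    have hS₂c : IsClosed S₂ := hW₁closed.preimage hcont
    have hcover : ∀ g : (G : Set (GL (Fin 4) ℝ)), g ∈ S₁ ∨ g ∈ S₂ := by
      intro g
      refine hnull _ ?_
      rw [hCg (g : GL (Fin 4) ℝ) g.2 v₀ v₀, hv₀]
    have hdisj : ∀ g : (G : Set (GL (Fin 4) ℝ)), g ∈ S₁ → g ∈ S₂ → False := by
      intro g h1 h2
      have h0 := hWW₁ _ h1 h2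
      apply hv₀ne
      have h3 := congrArg
        (fun x => (((g : GL (Fin 4) ℝ)⁻¹ : GL (Fin 4) ℝ) : Matrix (Fin 4) (Fin 4) ℝ).mulVec x) h0
      rwa [hg_cancel', mulVec_zero] at h3
    have hS₁compl : S₁ᶜ = S₂ := by
      ext g
      constructor
      · intro h
        exact (hcover g).resolve_left h
      · intro h hg
        exact hdisj g hg h
    have hopen : IsOpen S₁ := by
      rw [← isClosed_compl_iff, hS₁compl]
      exact hS₂c
    have hone : (⟨1, G.one_mem⟩ : (G : Set (GL (Fin 4) ℝ))) ∈ S₁ := by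
      show ((1 : GL (Fin 4) ℝ) : Matrix (Fin 4) (Fin 4) ℝ).mulVec v₀ ∈ W
      rw [Units.val_one, one_mulVec]
      exact Submodule.subset_span (by simp)
    have huniv : S₁ = Set.univ := by
      rcases isClopen_iff.mp ⟨hS₁c, hopen⟩ with h | h
      · rw [h] at hone; exact absurd hone (Set.notMem_empty _)
      · exact h
    intro g hg
    have : (⟨g, hg⟩ : (G : Set (GL (Fin 4) ℝ))) ∈ S₁ := by rw [huniv]; trivial
    exact this
  -- conclusion
  refine ⟨W, ?_, ?_, ?_⟩
  · intro h
    apply hv₀ne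
    have : v₀ ∈ W := Submodule.subset_span (by simp)
    rw [h] at this
    simpa using this
  · intro h
    apply hv₁ne
    refine hWW₁ v₁ ?_ (Submodule.subset_span (by simp))
    rw [h]; trivial
  · intro g hg v hv
    obtain ⟨z, rfl⟩ := (hWiff v).mp hv
    rw [hsm_g g hg]
    obtain ⟨z', hz'⟩ := (hWiff _).mp (hGW g hg)
    rw [hz', hsm_mul]
    exact (hWiff _).mpr ⟨_, rfl⟩
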